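/- Let c ∈ ℝ and let f : (0,∞) → ℝ be positive and C² such that t ↦ log(f(t)·e^{ct²/2}) is concave on (0,∞) and lim_{t→0⁺} f(t) = 0. Then there exists δ > 0 such that for every ε ∈ (0,δ), setting C₀ := −log(f(ε)e^{cε²/2})/ε, one has f(t)·e^{ct²/2} ≤ e^{C₀ t} for all t > 4ε. -/
import Mathlib


open Real Set

/-- Linear exponential bound from concavity of `log(f e^{ct²/2})` (Sturm-type
volume growth step). -/
theorem stmt_10 (c : ℝ) (f : ℝ → ℝ)
    (hf_pos : ∀ t, 0 < t → 0 < f t)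
    (hf_C2 : ContDiffOn ℝ 2 f (Set.Ioi 0))
    (hconc : ConcaveOn ℝ (Set.Ioi 0)
      (fun t => Real.log (f t * Real.exp (c * t ^ 2 / 2))))
    (hlim : Filter.Tendsto f (nhdsWithin 0 (Set.Ioi 0)) (nhds 0)) :
    ∃ δ > (0:ℝ), ∀ ε ∈ Set.Ioo (0:ℝ) δ, ∀ t, 4 * ε < t →
      f t * Real.exp (c * t ^ 2 / 2) ≤
        Real.exp ((-Real.log (f ε * Real.exp (c * ε ^ 2 / 2)) / ε) * t) := by
  set g : ℝ → ℝ := fun t => Real.log (f t * Real.exp (c * t ^ 2 / 2)) with hg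
  have hev : ∀ᶠ s in nhdsWithin 0 (Set.Ioi 0), f s < Real.exp (-|c|) :=
    hlim.eventually_lt_const (Real.exp_pos _)
  rw [eventually_nhdsWithin_iff, Metric.eventually_nhds_iff] at hev
  obtain ⟨δ', hδ'pos, hδ'⟩ := hev
  have hgneg : ∀ s, 0 < s → s < min δ' 1 → g s < 0 := by
    intro s hs hs'
    have h1 : f s < Real.exp (-|c|) := by
      apply hδ' (y := s) ?_ hs
      rw [Real.dist_eq, sub_zero, abs_of_pos hs]
      exact lt_of_lt_of_le hs' (min_le_left _ _)
    have h2 : Real.exp (c * s ^ 2 / 2) ≤ Real.exp |c| := by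
      apply Real.exp_le_exp.mpr
      have hs1 : s ≤ 1 := le_of_lt (lt_of_lt_of_le hs' (min_le_right _ _))
      have hsq : s ^ 2 ≤ 1 := by nlinarith
      have : c * s ^ 2 ≤ |c| * 1 := by
        calc c * s ^ 2 ≤ |c| * s ^ 2 := by nlinarith [le_abs_self c, sq_nonneg s]
          _ ≤ |c| * 1 := by nlinarith [abs_nonneg c]
      nlinarith [abs_nonneg c]
    have hlt : f s * Real.exp (c * s ^ 2 / 2) < 1 := by
      have e1 := mul_lt_mul_of_pos_right h1 (Real.exp_pos (c * s ^ 2 / 2))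
      have e2 := mul_le_mul_of_nonneg_left h2 (Real.exp_pos (-|c|)).le
      have e3 : Real.exp (-|c|) * Real.exp |c| = 1 := by
        rw [← Real.exp_add]; simp
      linarith
    have hpos : 0 < f s * Real.exp (c * s ^ 2 / 2) :=
      mul_pos (hf_pos s hs) (Real.exp_pos _)
    exact Real.log_neg hpos hlt
  refine ⟨min δ' 1 / 2, by positivity, ?_⟩
  rintro ε ⟨hε0, hεδ⟩ t ht
  have hε2 : 2 * ε < min δ' 1 := by linarith
  have hgε : g ε < 0 := hgneg ε hε0 (by linarith)
  have hg2ε : g (2 * ε) < 0 := hgneg (2 * ε) (by linarith) hε2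
  have htε : 0 < t - ε := by linarith
  set a : ℝ := (t - 2 * ε) / (t - ε) with hadef
  set b : ℝ := ε / (t - ε) with hbdef
  have ha : 0 ≤ a := div_nonneg (by linarith) htε.le
  have hb : 0 < b := div_pos hε0 htε
  have hab : a + b = 1 := by rw [hadef, hbdef]; field_simp; ring
  have hcomb : a • ε + b • t = 2 * ε := by
    simp only [smul_eq_mul, hadef, hbdef]
    field_simp
    ring
  have hkey := hconc.2 (show ε ∈ Set.Ioi (0:ℝ) from hε0)
    (show t ∈ Set.Ioi (0:ℝ) by simp only [Set.mem_Ioi]; linarith) ha hb.le hab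
  rw [hcomb] at hkey
  have hgt : g t ≤ (-(g ε) / ε) * t := by
    have h1 : a * g ε + b * g t ≤ g (2 * ε) := hkey
    have h2 : g t * b ≤ -a * g ε := by nlinarith
    have h3 : g t ≤ (-a * g ε) / b := (le_div_iff₀ hb).mpr h2
    have h4 : (-a * g ε) / b = -((t - 2 * ε) / ε) * g ε := by
      rw [hadef, hbdef]
      field_simp
    rw [h4] at h3
    rw [div_mul_eq_mul_div, le_div_iff₀ hε0]
    have h5 := mul_le_mul_of_nonneg_right h3 hε0.le
    have hε' : -((t - 2 * ε) / ε) * g ε * ε = -(t - 2 * ε) * g ε := by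
      field_simp
    rw [hε'] at h5
    nlinarith
  have hpos : 0 < f t * Real.exp (c * t ^ 2 / 2) :=
    mul_pos (hf_pos t (by linarith)) (Real.exp_pos _)
  rw [← Real.exp_log hpos]
  exact Real.exp_le_exp.mpr hgt
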